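/- arXiv:2306.06903 — 2 statements merged into one kernel-verified Lean document; each statement's English description precedes it below -/
import Mathlib

section
/- Let A be a fuzzy linear code in F_q^n with n ≥ 1. If |Im(A)| > 1 and for every γ ∈ Im(A) there exists ε ∈ Im(A) with A_γ = (A_ε)^⊥, then there exists a fuzzy linear code B in F_q^n with A ⊥ B, i.e., Im(B) = {1 − c : c ∈ Im(A)} and B_{1−t} = (A_t)^⊥ for every t ∈ Im(A). -/
open scoped BigOperators

/-- A fuzzy set in `V`: a membership function with values in `[0,1]`. -/
def IsFuzzySet {V : Type*} (A : V → ℝ) : Prop :=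
  ∀ x, 0 ≤ A x ∧ A x ≤ 1

/-- The upper `α`-level cut of a fuzzy set `A`. -/
def levelCut {V : Type*} (A : V → ℝ) (α : ℝ) : Set V :=
  {x | α ≤ A x}

/-- A set of vectors is an `F`-linear subspace. -/
def IsLinearSubspaceSet (F : Type*) {V : Type*} [Field F] [AddCommGroup V] [Module F V]
    (s : Set V) : Prop :=
  ∃ W : Submodule F V, s = (W : Set V)

/-- A fuzzy linear code: a fuzzy set all of whose nonempty upper `α`-level cuts
(for `α ∈ [0,1]`) are linear subspaces. -/
def IsFuzzyLinearCode (F : Type*) {V : Type*} [Field F] [AddCommGroup V] [Module F V]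
    (A : V → ℝ) : Prop :=
  IsFuzzySet A ∧
    ∀ α ∈ Set.Icc (0 : ℝ) 1, (levelCut A α).Nonempty → IsLinearSubspaceSet F (levelCut A α)

/-- The Euclidean dual of a set of vectors in `F^n`. -/
def dualSet {F : Type*} [Field F] {n : ℕ} (S : Set (Fin n → F)) : Set (Fin n → F) :=
  {y | ∀ x ∈ S, ∑ i, x i * y i = 0}

/-- `B` is orthogonal to `A` (written `A ⊥ B`): the image of `B` is
`{1 - c : c ∈ Im A}` and `B_{1-t} = (A_t)^⊥` for every `t ∈ Im A`. -/
def FuzzyOrth {F : Type*} [Field F] {n : ℕ} (A B : (Fin n → F) → ℝ) : Prop :=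
  Set.range B = (fun c => 1 - c) '' Set.range A ∧
    ∀ t ∈ Set.range A, levelCut B (1 - t) = dualSet (levelCut A t)

lemma dualSet_anti {F : Type*} [Field F] {n : ℕ} {S S' : Set (Fin n → F)}
    (h : S ⊆ S') : dualSet S' ⊆ dualSet S := fun _ hy x hx => hy x (h hx)

lemma isLinearSet_dualSet {F : Type*} [Field F] {n : ℕ} (S : Set (Fin n → F)) :
    IsLinearSubspaceSet F (dualSet S) := by
  refine ⟨{ carrier := dualSet S
            add_mem' := ?_
            zero_mem' := ?_
            smul_mem' := ?_ }, rfl⟩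
  · intro a b ha hb x hx
    have h1 := ha x hx
    have h2 := hb x hx
    simp only [Pi.add_apply, mul_add, Finset.sum_add_distrib, h1, h2, add_zero]
  · intro x hx
    simp
  · intro c y hy x hx
    have h1 := hy x hx
    simp only [Pi.smul_apply, smul_eq_mul, mul_left_comm]
    rw [← Finset.mul_sum, h1, mul_zero]

/-- if a fuzzy linear code `A` in `F_q^n` has `|Im A| > 1` and every
`γ ∈ Im A` satisfies `A_γ = (A_ε)^⊥` for some `ε ∈ Im A`, then there is a fuzzy linear
code `B` with `A ⊥ B`. -/
theorem exists_orthogonal_fuzzyLinearCode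
    {F : Type} [Field F] [Fintype F] {n : ℕ} (hn : 0 < n)
    (A : (Fin n → F) → ℝ) (hA : IsFuzzyLinearCode F A)
    (him : 1 < (Set.range A).ncard)
    (hdual : ∀ γ ∈ Set.range A, ∃ ε ∈ Set.range A, levelCut A γ = dualSet (levelCut A ε)) :
    ∃ B : (Fin n → F) → ℝ, IsFuzzyLinearCode F B ∧ FuzzyOrth A B := by
  classical
  obtain ⟨hA1, -⟩ := hA
  have hfin : (Set.range A).Finite := Set.finite_range A
  set T : Finset ℝ := hfin.toFinset with hTdef
  have hmemT : ∀ t, t ∈ T ↔ t ∈ Set.range A := fun t => hfin.mem_toFinset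
  have hTne : T.Nonempty := ⟨A 0, (hmemT _).2 ⟨0, rfl⟩⟩
  have hcut_anti : ∀ {s t : ℝ}, s ≤ t → levelCut A t ⊆ levelCut A s :=
    fun h x hx => le_trans h hx
  have hdmono : ∀ {s t : ℝ}, s ≤ t →
      dualSet (levelCut A s) ⊆ dualSet (levelCut A t) :=
    fun h => dualSet_anti (hcut_anti h)
  choose eps heps hcuteq using hdual
  -- strict antitonicity of eps
  have hkey : ∀ γ (hγ : γ ∈ Set.range A) δ (hδ : δ ∈ Set.range A),
      γ < δ → eps δ hδ < eps γ hγ := by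
    intro γ hγ δ hδ hlt
    by_contra hle
    push_neg at hle
    obtain ⟨x, hx⟩ := id hγ
    have h1 : x ∈ levelCut A γ := le_of_eq hx.symm
    have h2 : x ∉ levelCut A δ := fun h => absurd (le_trans h (le_of_eq hx)) (not_le.2 hlt)
    have hsub : levelCut A γ ⊆ levelCut A δ := by
      rw [hcuteq γ hγ, hcuteq δ hδ]
      exact hdmono hle
    exact h2 (hsub h1)
  -- eps as a self-map of the finite type ↥T is injective, hence surjective
  have hsurj : ∀ t ∈ Set.range A, ∃ δ, ∃ hδ : δ ∈ Set.range A, eps δ hδ = t := by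
    intro t ht
    let f : {s : ℝ // s ∈ T} → {s : ℝ // s ∈ T} :=
      fun s => ⟨eps s.1 ((hmemT _).1 s.2), (hmemT _).2 (heps _ _)⟩
    have hfinj : Function.Injective f := by
      intro a b hab
      by_contra hne
      have hne' : a.1 ≠ b.1 := fun h => hne (Subtype.ext h)
      have hab' : eps a.1 ((hmemT _).1 a.2) = eps b.1 ((hmemT _).1 b.2) :=
        congrArg Subtype.val hab
      rcases lt_or_gt_of_ne hne' with h | h
      · exact absurd hab'.symm (ne_of_lt (hkey _ ((hmemT _).1 a.2) _ ((hmemT _).1 b.2) h))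
      · exact absurd hab' (ne_of_lt (hkey _ ((hmemT _).1 b.2) _ ((hmemT _).1 a.2) h))
    have hfsurj : Function.Surjective f := Finite.surjective_of_injective hfinj
    obtain ⟨⟨δ, hδT⟩, hfe⟩ := hfsurj ⟨t, (hmemT t).2 ht⟩
    exact ⟨δ, (hmemT δ).1 hδT, congrArg Subtype.val hfe⟩
  -- the minimum image value has full level cut, so its eps has full dual
  have ht0T := T.min'_mem hTne
  have ht0 : T.min' hTne ∈ Set.range A := (hmemT _).1 ht0T
  have hA_t0 : levelCut A (T.min' hTne) = Set.univ := by
    ext x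
    simp only [levelCut, Set.mem_setOf_eq, Set.mem_univ, iff_true]
    exact T.min'_le _ ((hmemT _).2 ⟨x, rfl⟩)
  have hU : dualSet (levelCut A (eps _ ht0)) = Set.univ :=
    (hcuteq _ ht0).symm.trans hA_t0
  -- the membership-minimum function m
  set Sy : (Fin n → F) → Finset ℝ :=
    fun y => T.filter (fun t => y ∈ dualSet (levelCut A t)) with hSydef
  have hSne : ∀ y, (Sy y).Nonempty := by
    intro y
    refine ⟨eps _ ht0, Finset.mem_filter.2 ⟨(hmemT _).2 (heps _ _), ?_⟩⟩
    rw [hU]; trivial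
  set m : (Fin n → F) → ℝ := fun y => (Sy y).min' (hSne y) with hmdef
  have hmmem : ∀ y, m y ∈ Sy y := fun y => (Sy y).min'_mem _
  have hmT : ∀ y, m y ∈ Set.range A := fun y => (hmemT _).1 (Finset.mem_filter.1 (hmmem y)).1
  have hmdual : ∀ y, y ∈ dualSet (levelCut A (m y)) := fun y => (Finset.mem_filter.1 (hmmem y)).2
  have hmle : ∀ y t, t ∈ Set.range A → y ∈ dualSet (levelCut A t) → m y ≤ t :=
    fun y t ht hy => Finset.min'_le _ _ (Finset.mem_filter.2 ⟨(hmemT _).2 ht, hy⟩)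
  have hm01 : ∀ y, 0 ≤ m y ∧ m y ≤ 1 := by
    intro y
    obtain ⟨x, hx⟩ := hmT y
    exact hx ▸ hA1 x
  refine ⟨fun y => 1 - m y, ⟨?_, ?_⟩, ?_, ?_⟩
  · -- IsFuzzySet
    intro y
    have h := hm01 y
    constructor
    · show (0:ℝ) ≤ 1 - m y
      linarith [h.2]
    · show (1:ℝ) - m y ≤ 1
      linarith [h.1]
  · -- level cuts of B are linear
    intro α hα hne
    obtain ⟨y₀, hy₀⟩ := hne
    have hy₀' : α ≤ 1 - m y₀ := hy₀
    have hmy₀ : m y₀ ≤ 1 - α := by linarith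
    set U : Finset ℝ := T.filter (fun t => t ≤ 1 - α) with hUdef
    have hUne : U.Nonempty :=
      ⟨m y₀, Finset.mem_filter.2 ⟨(hmemT _).2 (hmT y₀), hmy₀⟩⟩
    set ts := U.max' hUne with htsdef
    have htsU := U.max'_mem hUne
    have htsT : ts ∈ Set.range A := (hmemT _).1 (Finset.mem_filter.1 htsU).1
    have htsle : ts ≤ 1 - α := (Finset.mem_filter.1 htsU).2
    have heq : levelCut (fun y => 1 - m y) α = dualSet (levelCut A ts) := by
      ext y
      constructor
      · intro hy
        have hy' : α ≤ 1 - m y := hy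
        have h1 : m y ≤ 1 - α := by linarith
        have h2 : m y ≤ ts :=
          U.le_max' _ (Finset.mem_filter.2 ⟨(hmemT _).2 (hmT y), h1⟩)
        exact hdmono h2 (hmdual y)
      · intro hy
        have h1 : m y ≤ ts := hmle y ts htsT hy
        show α ≤ 1 - m y
        linarith
    rw [heq]
    exact isLinearSet_dualSet _
  · -- range B = (1 - ·) '' range A
    ext r
    simp only [Set.mem_range, Set.mem_image]
    constructor
    · rintro ⟨y, rfl⟩
      exact ⟨m y, hmT y, rfl⟩
    · rintro ⟨c, hc, rfl⟩
      obtain ⟨δ, hδ, hepsδ⟩ := hsurj c hc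
      obtain ⟨x, hx⟩ := hδ
      have hxdual : x ∈ dualSet (levelCut A c) := by
        rw [← hepsδ, ← hcuteq δ ⟨x, hx⟩]
        exact le_of_eq hx.symm
      have h1 : m x ≤ c := hmle x c hc hxdual
      have h2 : c ≤ m x := by
        obtain ⟨γ, hγ, hepsγ⟩ := hsurj (m x) (hmT x)
        have hxγ : x ∈ levelCut A γ := by
          rw [hcuteq γ hγ, hepsγ]
          exact hmdual x
        have hγδ : γ ≤ δ := by
          have : γ ≤ A x := hxγ
          exact hx ▸ this
        rcases eq_or_lt_of_le hγδ with h | h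
        · subst h
          rw [← hepsγ, ← hepsδ]
        · have := hkey γ hγ δ ⟨x, hx⟩ h
          rw [hepsγ, hepsδ] at this
          exact le_of_lt this
      have : m x = c := le_antisymm h1 h2
      exact ⟨x, by rw [this]⟩
  · -- level cuts match duals
    intro t ht
    ext y
    constructor
    · intro hy
      have hy' : 1 - t ≤ 1 - m y := hy
      have h1 : m y ≤ t := by linarith
      exact hdmono h1 (hmdual y)
    · intro hy
      have h1 : m y ≤ t := hmle y t ht hy
      show 1 - t ≤ 1 - m y
      linarith
end

section
/- Let n ≥ 1 and let C ⊆ F_q^{2n} be a self-dual linear code (C = C^⊥, so dim C = n). Let s_1, …, s_n be a basis of C, set S_0 = {0} and S_i = span(s_1, …, s_i) for 1 ≤ i ≤ n (so S_n = C). Let α_0, α_1, …, α_n be reals with 1 ≥ α_0 > α_1 > ⋯ > α_{n−1} > α_n = 1/2. Define A : F_q^{2n} → ℝ by A(0) = α_0, A(x) = α_i for x ∈ S_i ∖ S_{i−1} (1 ≤ i ≤ n), and A(x) = 1 − α_i for x ∈ S_i^⊥ ∖ S_{i+1}^⊥ (0 ≤ i ≤ n−1); since S_0^⊥ = F_q^{2n}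 and S_n^⊥ = C, this defines A on all of F_q^{2n}. Then A is a fuzzy self-dual code in F_q^{2n}; moreover A_{α_i} = S_i and A_{1−α_i} = S_i^⊥ for all 0 ≤ i ≤ n. -/
open scoped BigOperators

/-- A fuzzy self-orthogonal code: a fuzzy linear code with `|Im A| > 1` such that
`(A_{1-α})^⊥ = A_α` for every `α ∈ Im A`. -/
def IsFuzzySelfOrthogonal {F : Type*} [Field F] {n : ℕ} (A : (Fin n → F) → ℝ) : Prop :=
  IsFuzzyLinearCode F A ∧ 1 < (Set.range A).ncard ∧
    ∀ α ∈ Set.range A, dualSet (levelCut A (1 - α)) = levelCut A α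

/-- A fuzzy self-dual code: a fuzzy self-orthogonal code such that `(A_β)^⊥ = A_β`
for some `β ∈ Im A`. -/
def IsFuzzySelfDual {F : Type*} [Field F] {n : ℕ} (A : (Fin n → F) → ℝ) : Prop :=
  IsFuzzySelfOrthogonal A ∧ ∃ β ∈ Set.range A, dualSet (levelCut A β) = levelCut A β


open scoped BigOperators

def dotForm (F : Type) [Field F] (m : ℕ) : LinearMap.BilinForm F (Fin m → F) :=
  LinearMap.mk₂ F (fun x y => ∑ i, x i * y i)
    (fun x x' y => by simp [add_mul, Finset.sum_add_distrib])
    (fun c x y => by simp [Finset.mul_sum, mul_assoc])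
    (fun x y y' => by simp [mul_add, Finset.sum_add_distrib])
    (fun c x y => by simp [Finset.mul_sum, mul_left_comm])

lemma dotForm_apply (F : Type) [Field F] (m : ℕ) (x y : Fin m → F) :
    dotForm F m x y = ∑ i, x i * y i := rfl

lemma dotForm_symm (F : Type) [Field F] (m : ℕ) : (dotForm F m).IsSymm := by
  constructor; intro x y; simp [dotForm_apply, mul_comm]

lemma dotForm_nondeg (F : Type) [Field F] (m : ℕ) : (dotForm F m).Nondegenerate := by
  constructor <;> intro x hx <;> funext i <;> have := hx (Pi.single i 1) <;>
    simpa [dotForm_apply, Pi.single_apply, Finset.sum_ite_eq', Finset.sum_ite_eq] using this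

lemma dualSet_coe (F : Type) [Field F] {m : ℕ} (W : Submodule F (Fin m → F)) :
    dualSet (W : Set (Fin m → F)) = ((dotForm F m).orthogonal W : Set (Fin m → F)) := by
  ext y
  simp [dualSet, LinearMap.BilinForm.mem_orthogonal_iff, LinearMap.BilinForm.IsOrtho,
    dotForm_apply]

lemma dualSet_dualSet (F : Type) [Field F] [Fintype F] {m : ℕ} (W : Submodule F (Fin m → F)) :
    dualSet (dualSet (W : Set (Fin m → F))) = (W : Set (Fin m → F)) := by
  rw [dualSet_coe, dualSet_coe,
    LinearMap.BilinForm.orthogonal_orthogonal (dotForm_nondeg F m) (dotForm_symm F m).isRefl]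

/-- given a self-dual `[2n, n]` code `C` over `F_q` with basis
`s 0, …, s (n-1)`, nested subcodes `S i = span(s 0, …, s (i-1))`, and reals
`1 ≥ α 0 > α 1 > ⋯ > α (n-1) > α n = 1/2`, the fuzzy set `A` with `A x = α i` on
`S i ∖ S (i-1)` (and `A 0 = α 0`) and `A x = 1 - α i` on `S i ^⊥ ∖ S (i+1) ^⊥`
is a fuzzy self-dual code, with `A_{α i} = S i` and `A_{1 - α i} = (S i)^⊥`. -/
theorem fuzzySelfDual_of_selfDual_chain
    {F : Type} [Field F] [Fintype F] {n : ℕ} (hn : 1 ≤ n)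
    (C : Submodule F (Fin (2 * n) → F))
    (hC : dualSet (C : Set (Fin (2 * n) → F)) = (C : Set (Fin (2 * n) → F)))
    (s : Fin n → (Fin (2 * n) → F))
    (hli : LinearIndependent F s)
    (hspan : Submodule.span F (Set.range s) = C)
    (S : ℕ → Submodule F (Fin (2 * n) → F))
    (hS : ∀ i ≤ n, S i = Submodule.span F (s '' {j : Fin n | (j : ℕ) < i}))
    (α : ℕ → ℝ)
    (hα1 : α 0 ≤ 1)
    (hαanti : ∀ i < n, α (i + 1) < α i)
    (hαn : α n = 1 / 2)
    (A : (Fin (2 * n) → F) → ℝ)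
    (hA0 : ∀ x ∈ (S 0 : Set (Fin (2 * n) → F)), A x = α 0)
    (hAmid : ∀ i, 1 ≤ i → i ≤ n → ∀ x ∈ (S i : Set (Fin (2 * n) → F)),
      x ∉ (S (i - 1) : Set (Fin (2 * n) → F)) → A x = α i)
    (hAdual : ∀ i, i + 1 ≤ n → ∀ x ∈ dualSet (S i : Set (Fin (2 * n) → F)),
      x ∉ dualSet (S (i + 1) : Set (Fin (2 * n) → F)) → A x = 1 - α i) :
    IsFuzzySelfDual A ∧
      (∀ i ≤ n, levelCut A (α i) = (S i : Set (Fin (2 * n) → F))) ∧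
      (∀ i ≤ n, levelCut A (1 - α i) = dualSet (S i : Set (Fin (2 * n) → F))) := by
  classical
  -- α facts
  have hαstrict : ∀ j ≤ n, ∀ i < j, α j < α i := by
    intro j hj
    induction j with
    | zero => intro i h; omega
    | succ k ih =>
      intro i hik
      have hk := hαanti k (by omega)
      rcases Nat.lt_succ_iff_lt_or_eq.mp hik with h | h
      · exact hk.trans (ih (by omega) i h)
      · subst h; exact hk
  have hαmono : ∀ i j, i ≤ j → j ≤ n → α j ≤ α i := by
    intro i j hij hjn
    rcases eq_or_lt_of_le hij with h | h
    · subst h; exact le_rfl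
    · exact (hαstrict j hjn i h).le
  have hαhalf : ∀ i ≤ n, 1 / 2 ≤ α i := by
    intro i hi; have := hαmono i n hi le_rfl; rw [hαn] at this; exact this
  have hαle1 : ∀ i ≤ n, α i ≤ 1 := fun i hi => (hαmono 0 i (Nat.zero_le i) hi).trans hα1
  -- S facts
  have hS0 : S 0 = ⊥ := by
    rw [hS 0 (Nat.zero_le n)]
    have : {j : Fin n | (j : ℕ) < 0} = (∅ : Set (Fin n)) := by ext j; simp
    rw [this]; simp
  have hSn : S n = C := by
    rw [hS n le_rfl]
    have : {j : Fin n | (j : ℕ) < n} = (Set.univ : Set (Fin n)) := by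
      ext j; simp [j.isLt]
    rw [this, Set.image_univ, hspan]
  have hSmono : ∀ i j, i ≤ j → j ≤ n → S i ≤ S j := by
    intro i j hij hjn
    rw [hS i (hij.trans hjn), hS j hjn]
    exact Submodule.span_mono (Set.image_mono (fun k hk => lt_of_lt_of_le hk hij))
  -- D
  set D : ℕ → Submodule F (Fin (2 * n) → F) := fun i => (dotForm F (2 * n)).orthogonal (S i)
    with hDdef
  have hdualD : ∀ i, dualSet (S i : Set (Fin (2 * n) → F)) = (D i : Set (Fin (2 * n) → F)) :=
    fun i => dualSet_coe F (S i)
  have hDn : (D n : Set (Fin (2 * n) → F)) = (C : Set (Fin (2 * n) → F)) := by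
    rw [← hdualD, hSn, hC]
  have hD0 : D 0 = ⊤ := by
    rw [hDdef]; simp only [hS0]; exact LinearMap.BilinForm.orthogonal_bot
  have hDanti : ∀ i j, i ≤ j → j ≤ n → D j ≤ D i := fun i j hij hjn =>
    LinearMap.BilinForm.orthogonal_le (hSmono i j hij hjn)
  have hdd : ∀ i, dualSet (D i : Set (Fin (2 * n) → F)) = (S i : Set (Fin (2 * n) → F)) := by
    intro i
    rw [← hdualD, dualSet_dualSet]
  -- classification
  have hmem : ∀ x ∈ C, ∃ j ≤ n, x ∈ S j ∧ A x = α j ∧ ∀ k ≤ n, x ∈ S k → j ≤ k := by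
    intro x hx
    have hxn : x ∈ S n := by rw [hSn]; exact hx
    have hex : ∃ k, x ∈ S k := ⟨n, hxn⟩
    set j := Nat.find hex with hj
    have hPj : x ∈ S j := Nat.find_spec hex
    have hjn : j ≤ n := Nat.find_min' hex hxn
    refine ⟨j, hjn, hPj, ?_, fun k _ hk => Nat.find_min' hex hk⟩
    rcases Nat.eq_zero_or_pos j with h0 | hpos
    · rw [h0] at hPj ⊢
      exact hA0 x hPj
    · have hlt : j - 1 < j := by omega
      have hnk : x ∉ S (j - 1) := Nat.find_min hex hlt
      exact hAmid j hpos hjn x hPj hnk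
  have hnotmem : ∀ x ∉ C, ∃ j < n, x ∈ D j ∧ A x = 1 - α j ∧ ∀ k ≤ n, x ∈ D k → k ≤ j := by
    intro x hx
    set j := Nat.findGreatest (fun k => x ∈ D k) n with hj
    have hP0 : x ∈ D 0 := by rw [hD0]; trivial
    have hPj : x ∈ D j := Nat.findGreatest_spec (P := fun k => x ∈ D k) (Nat.zero_le n) hP0
    have hjn : j ≤ n := Nat.findGreatest_le n
    have hmax : ∀ k ≤ n, x ∈ D k → k ≤ j := fun k hk hxk => Nat.le_findGreatest (P := fun k => x ∈ D k) hk hxk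
    have hjltn : j < n := by
      rcases lt_or_eq_of_le hjn with h | h
      · exact h
      · exfalso
        apply hx
        rw [h] at hPj
        have hxn : x ∈ (D n : Set (Fin (2 * n) → F)) := hPj
        rw [hDn] at hxn
        exact hxn
    have hnot : x ∉ D (j + 1) := by
      intro h
      have := hmax (j + 1) (by omega) h
      omega
    refine ⟨j, hjltn, hPj, ?_, hmax⟩
    exact hAdual j (by omega) x (by rw [hdualD]; exact hPj) (by rw [hdualD]; exact hnot)
  -- level cuts
  have cut1 : ∀ i ≤ n, levelCut A (α i) = (S i : Set (Fin (2 * n) → F)) := by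
    intro i hi
    ext x
    constructor
    · intro hx
      have hx' : α i ≤ A x := hx
      by_cases hxC : x ∈ C
      · obtain ⟨j, hjn, hxS, hAx, -⟩ := hmem x hxC
        have hji : j ≤ i := by
          by_contra h
          have := hαstrict j hjn i (by omega)
          rw [← hAx] at this; linarith
        exact hSmono j i hji hi hxS
      · obtain ⟨j, hjn, -, hAx, -⟩ := hnotmem x hxC
        exfalso
        have h1 : 1 / 2 < α j := by
          have := hαstrict n le_rfl j hjn
          rw [hαn] at this
          linarith
        have h2 := hαhalf i hi
        rw [hAx] at hx'
        linarith
    · intro hx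
      have hxC : x ∈ C := by rw [← hSn]; exact hSmono i n hi le_rfl hx
      obtain ⟨j, hjn, -, hAx, hmin⟩ := hmem x hxC
      have hji : j ≤ i := hmin i hi hx
      show α i ≤ A x
      rw [hAx]
      exact hαmono j i hji hi
  have cut2 : ∀ i ≤ n, levelCut A (1 - α i) = (D i : Set (Fin (2 * n) → F)) := by
    intro i hi
    ext x
    constructor
    · intro hx
      have hx' : 1 - α i ≤ A x := hx
      by_cases hxC : x ∈ C
      · apply hDanti i n hi le_rfl
        rw [← SetLike.mem_coe, hDn]; exact hxC
      · obtain ⟨j, hjn, hxD, hAx, -⟩ := hnotmem x hxC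
        have hij : i ≤ j := by
          by_contra h
          have := hαstrict i hi j (by omega)
          rw [hAx] at hx'; linarith
        exact hDanti i j hij (le_of_lt hjn) hxD
    · intro hx
      show 1 - α i ≤ A x
      by_cases hxC : x ∈ C
      · obtain ⟨j, hjn, -, hAx, -⟩ := hmem x hxC
        have := hαhalf j hjn
        have := hαhalf i hi
        rw [hAx]; linarith
      · obtain ⟨j, hjn, -, hAx, hmax⟩ := hnotmem x hxC
        have hij : i ≤ j := hmax i hi hx
        have := hαmono i j hij (le_of_lt hjn)
        rw [hAx]; linarith
  -- bounds on A
  have hAbound : ∀ x, 0 ≤ A x ∧ A x ≤ 1 := by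
    intro x
    by_cases hxC : x ∈ C
    · obtain ⟨j, hjn, -, hAx, -⟩ := hmem x hxC
      have := hαhalf j hjn
      have := hαle1 j hjn
      rw [hAx]; constructor <;> linarith
    · obtain ⟨j, hjn, -, hAx, -⟩ := hnotmem x hxC
      have := hαhalf j (le_of_lt hjn)
      have := hαle1 j (le_of_lt hjn)
      rw [hAx]; constructor <;> linarith
  -- α 0 and α n in the range
  have hr1 : α 0 ∈ Set.range A := by
    refine ⟨0, ?_⟩
    exact hA0 0 (Submodule.zero_mem (S 0))
  have hlast : (⟨n - 1, by omega⟩ : Fin n) ∈ ({j : Fin n | (j : ℕ) < n} : Set (Fin n)) := by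
    simp
  have hr2 : α n ∈ Set.range A := by
    set x := s ⟨n - 1, by omega⟩ with hxdef
    have hx1 : x ∈ S n := by
      rw [hS n le_rfl]
      exact Submodule.subset_span ⟨_, hlast, rfl⟩
    have hx2 : x ∉ S (n - 1) := by
      rw [hS (n - 1) (by omega)]
      apply hli.notMem_span_image
      simp
    exact ⟨x, hAmid n hn le_rfl x hx1 hx2⟩
  have hα0n : α n < α 0 := hαstrict n le_rfl 0 hn
  -- assemble
  have hfuzzy : IsFuzzyLinearCode F A := by
    refine ⟨hAbound, ?_⟩
    intro γ hγ hne
    by_cases hγhalf : γ ≤ 1 / 2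
    · have hPn : γ ≤ 1 - α n := by rw [hαn]; linarith
      have hex : ∃ k, γ ≤ 1 - α k := ⟨n, hPn⟩
      set i := Nat.find hex with hi
      have hPi : γ ≤ 1 - α i := Nat.find_spec hex
      have hin : i ≤ n := Nat.find_min' hex hPn
      refine ⟨D i, ?_⟩
      ext x
      constructor
      · intro hx
        have hx' : γ ≤ A x := hx
        by_cases hxC : x ∈ C
        · apply hDanti i n hin le_rfl
          rw [← SetLike.mem_coe, hDn]; exact hxC
        · obtain ⟨j, hjn, hxD, hAx, -⟩ := hnotmem x hxC
          have hij : i ≤ j := Nat.find_min' hex (by show γ ≤ 1 - α j; rw [← hAx]; exact hx')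
          exact hDanti i j hij (le_of_lt hjn) hxD
      · intro hx
        have : x ∈ levelCut A (1 - α i) := by rw [cut2 i hin]; exact hx
        have hx' : 1 - α i ≤ A x := this
        show γ ≤ A x
        linarith
    · push_neg at hγhalf
      obtain ⟨y, hy⟩ := hne
      have hy' : γ ≤ A y := hy
      have hyC : y ∈ C := by
        by_contra hyC
        obtain ⟨j, hjn, -, hAy, -⟩ := hnotmem y hyC
        have := hαhalf j (le_of_lt hjn)
        rw [hAy] at hy'; linarith
      obtain ⟨j0, hj0n, -, hAy, -⟩ := hmem y hyC
      have hPj0 : γ ≤ α j0 := by rw [← hAy]; exact hy'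
      set i := Nat.findGreatest (fun k => γ ≤ α k) n with hi
      have hPi : γ ≤ α i := Nat.findGreatest_spec (P := fun k => γ ≤ α k) hj0n hPj0
      have hin : i ≤ n := Nat.findGreatest_le n
      refine ⟨S i, ?_⟩
      ext x
      constructor
      · intro hx
        have hx' : γ ≤ A x := hx
        by_cases hxC : x ∈ C
        · obtain ⟨k, hkn, hxS, hAx, -⟩ := hmem x hxC
          have hki : k ≤ i := Nat.le_findGreatest (P := fun k => γ ≤ α k) hkn (by show γ ≤ α k; rw [← hAx]; exact hx')
          exact hSmono k i hki hin hxS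
        · obtain ⟨k, hkn, -, hAx, -⟩ := hnotmem x hxC
          have := hαhalf k (le_of_lt hkn)
          rw [hAx] at hx'; exfalso; linarith
      · intro hx
        have : x ∈ levelCut A (α i) := by rw [cut1 i hin]; exact hx
        have hx' : α i ≤ A x := this
        show γ ≤ A x
        linarith
  have hrangefin : (Set.range A).Finite := Set.finite_range A
  have hcard : 1 < (Set.range A).ncard := by
    rw [Set.one_lt_ncard hrangefin]
    exact ⟨α 0, hr1, α n, hr2, by linarith⟩
  have hortho : ∀ β ∈ Set.range A, dualSet (levelCut A (1 - β)) = levelCut A β := by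
    rintro β ⟨x, rfl⟩
    by_cases hxC : x ∈ C
    · obtain ⟨j, hjn, -, hAx, -⟩ := hmem x hxC
      rw [hAx, cut2 j hjn, cut1 j hjn, hdd]
    · obtain ⟨j, hjn, -, hAx, -⟩ := hnotmem x hxC
      have h1 : (1 : ℝ) - (1 - α j) = α j := by ring
      rw [hAx, h1, cut1 j (le_of_lt hjn), cut2 j (le_of_lt hjn), hdualD]
  refine ⟨⟨⟨hfuzzy, hcard, hortho⟩, α n, hr2, ?_⟩, cut1, fun i hi => by
    rw [cut2 i hi, hdualD]⟩
  rw [cut1 n le_rfl, hSn, hC]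
end
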